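/- Suppose Assumption 1 holds: Σ_{r=0}^∞ sup_{τ∈ℤ} (ξ_{τ,r}² σ_{τ−r}²) < ∞ and for every t ∈ ℤ the series μ_t := Σ_{r=0}^∞ ξ_{t,r} φ_0(t−r) converges. For each t let Y_t = μ_t + Z_t, where Z_t is the L² limit of the partial sums Σ_{r=0}^{n} ξ_{t,r} ε_{t−r}. Then for every t ∈ ℤ and every integer N ≥ 1, the autocovariances satisfy the recursion Cov(Y_t, Y_{t−N}) = ξ_{t,N} Var(Y_{t−N}) + Σ_{m=1}^{p−1} Σ_{i=1}^{p−m} φ_{m+i}(t−N+i) ξ_{t,N−i} Cov(Y_{t−N}, Y_{t−N−m}). -/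

import Mathlib

open Finset

/-- The `k × k` solution matrix `Φ_{t,k}`: its (1-based) `(i,j)` entry is `-1` if `i = j-1`,
`φ_{1+i−j}(t−k+i)` if `0 ≤ i−j ≤ p−1`, and `0` otherwise. -/
noncomputable def PhiMat (p : ℕ) (φ : ℕ → ℤ → ℝ) (t : ℤ) (k : ℕ) :
    Matrix (Fin k) (Fin k) ℝ :=
  fun i j =>
    if (i : ℕ) + 1 = (j : ℕ) then -1
    else if (j : ℕ) ≤ (i : ℕ) ∧ (i : ℕ) - (j : ℕ) + 1 ≤ p then
      φ ((i : ℕ) - (j : ℕ) + 1) (t - (k : ℤ) + (i : ℕ) + 1)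
    else 0

/-- The Hessenbergian (Green function) `ξ_{t,k} = det Φ_{t,k}`, with the conventions
`ξ_{t,0} = 1` (empty determinant) and `ξ_{t,k} = 0` for `k < 0`. -/
noncomputable def xi (p : ℕ) (φ : ℕ → ℤ → ℝ) (t : ℤ) (k : ℤ) : ℝ :=
  if 0 ≤ k then (PhiMat p φ t k.toNat).det else 0

open MeasureTheory Filter


/-- ℕ-level entry function. -/
noncomputable def entAux (p : ℕ) (φ : ℕ → ℤ → ℝ) (t : ℤ) (k : ℕ) (x y : ℕ) : ℝ :=
  if x + 1 = y then -1
  else if y ≤ x ∧ x - y + 1 ≤ p then φ (x - y + 1) (t - (k : ℤ) + x + 1) else 0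

lemma PhiMat_apply (p : ℕ) (φ : ℕ → ℤ → ℝ) (t : ℤ) (k : ℕ) (r c : Fin k) :
    PhiMat p φ t k r c = entAux p φ t k (r : ℕ) (c : ℕ) := rfl

lemma succAbove_val {n : ℕ} (i : Fin (n+1)) (r : Fin n) :
    ((i.succAbove r : Fin (n+1)) : ℕ) = if (r:ℕ) < (i:ℕ) then (r:ℕ) else (r:ℕ)+1 := by
  rw [Fin.succAbove]
  split
  · rw [if_pos]
    · simp
    · simpa [Fin.lt_def] using ‹_›
  · have h2 : i ≤ r.castSucc := Fin.not_lt.mp ‹_›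
    have h3 : (i:ℕ) ≤ (r:ℕ) := by simpa [Fin.le_def] using h2
    rw [if_neg (by omega)]
    simp

lemma minor_det (p : ℕ) (φ : ℕ → ℤ → ℝ) (t : ℤ) (k : ℕ) (i : Fin (k+1)) :
    ((PhiMat p φ t (k+1)).submatrix i.succAbove Fin.succ).det
      = (-1)^(i:ℕ) * (PhiMat p φ t (k - (i:ℕ))).det := by
  set a := (i : ℕ) with ha
  have hak : a ≤ k := Nat.lt_succ_iff.mp i.isLt
  have hk : a + (k - a) = k := Nat.add_sub_cancel' hak
  set e : (Fin a ⊕ Fin (k - a)) ≃ Fin k := finSumFinEquiv.trans (finCongr hk) with he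
  set M := (PhiMat p φ t (k+1)).submatrix i.succAbove Fin.succ with hM
  have h1 : M.det = ((M.submatrix e e)).det := (Matrix.det_submatrix_equiv_self e M).symm
  set B := M.submatrix e e with hB
  have hvl : ∀ u : Fin a, ((e (Sum.inl u) : Fin k) : ℕ) = (u : ℕ) := by
    intro u; simp [he]
  have hvr : ∀ v : Fin (k - a), ((e (Sum.inr v) : Fin k) : ℕ) = a + (v : ℕ) := by
    intro v; simp [he]
  -- row and column values
  have hrowl : ∀ u : Fin a, ((i.succAbove (e (Sum.inl u))) : ℕ) = (u : ℕ) := by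
    intro u; rw [succAbove_val, hvl]; rw [if_pos]; exact u.isLt
  have hrowr : ∀ v : Fin (k - a), ((i.succAbove (e (Sum.inr v))) : ℕ) = a + (v : ℕ) + 1 := by
    intro v; rw [succAbove_val, hvr]; rw [if_neg]; omega
  have hcoll : ∀ u : Fin a, (((e (Sum.inl u)).succ : Fin (k+1)) : ℕ) = (u : ℕ) + 1 := by
    intro u; rw [Fin.val_succ, hvl]
  have hcolr : ∀ v : Fin (k - a), (((e (Sum.inr v)).succ : Fin (k+1)) : ℕ) = a + (v : ℕ) + 1 := by
    intro v; rw [Fin.val_succ, hvr]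
  have hentry : ∀ r c, B r c = entAux p φ t (k+1)
      (Sum.elim (fun u : Fin a => (u:ℕ)) (fun v : Fin (k-a) => a + (v:ℕ) + 1) r)
      (Sum.elim (fun u : Fin a => (u:ℕ) + 1) (fun v : Fin (k-a) => a + (v:ℕ) + 1) c) := by
    rintro (u | v) (w | w) <;>
      simp only [hB, Matrix.submatrix_apply, hM, PhiMat_apply, Sum.elim_inl, Sum.elim_inr,
        hrowl, hrowr, hcoll, hcolr]
  have hB12 : B.toBlocks₁₂ = 0 := by
    ext u v
    have := hentry (Sum.inl u) (Sum.inr v)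
    simp only [Sum.elim_inl, Sum.elim_inr] at this
    simp only [Matrix.toBlocks₁₂, Matrix.of_apply, this, Matrix.zero_apply, entAux]
    have h1 : ¬ ((u:ℕ) + 1 = a + (v:ℕ) + 1) := by have := u.isLt; omega
    have h2 : ¬ (a + (v:ℕ) + 1 ≤ (u:ℕ)) := by have := u.isLt; omega
    rw [if_neg h1, if_neg (by tauto)]
  have hB11 : B.toBlocks₁₁.det = (-1 : ℝ)^a := by
    have htri : B.toBlocks₁₁.BlockTriangular OrderDual.toDual := by
      intro u w huw
      have huw' : (u : Fin a) < w := huw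
      have := hentry (Sum.inl u) (Sum.inl w)
      simp only [Sum.elim_inl] at this
      simp only [Matrix.toBlocks₁₁, Matrix.of_apply, this, entAux]
      have h1 : ¬ ((u:ℕ) + 1 = (w:ℕ) + 1) := by
        have : (u:ℕ) < (w:ℕ) := huw'
        omega
      have h2 : ¬ ((w:ℕ) + 1 ≤ (u:ℕ)) := by
        have : (u:ℕ) < (w:ℕ) := huw'
        omega
      rw [if_neg h1, if_neg (by tauto)]
    rw [Matrix.det_of_lowerTriangular _ htri]
    have hdiag : ∀ u : Fin a, B.toBlocks₁₁ u u = -1 := by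
      intro u
      have := hentry (Sum.inl u) (Sum.inl u)
      simp only [Sum.elim_inl] at this
      simp only [Matrix.toBlocks₁₁, Matrix.of_apply, this, entAux]
      norm_num
    simp only [hdiag]
    simp
  have hB22 : B.toBlocks₂₂ = PhiMat p φ t (k - a) := by
    ext v w
    have := hentry (Sum.inr v) (Sum.inr w)
    simp only [Sum.elim_inr] at this
    simp only [Matrix.toBlocks₂₂, Matrix.of_apply, this, entAux, PhiMat_apply]
    have h1 : (a + (v:ℕ) + 1) + 1 = a + (w:ℕ) + 1 ↔ (v:ℕ) + 1 = (w:ℕ) := by omega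
    have h2 : (a + (w:ℕ) + 1 ≤ a + (v:ℕ) + 1) ↔ (w:ℕ) ≤ (v:ℕ) := by omega
    have h3 : (a + (v:ℕ) + 1) - (a + (w:ℕ) + 1) = (v:ℕ) - (w:ℕ) := by omega
    have h4 : t - ((k:ℤ)+1) + ((a:ℕ) + (v:ℕ) + 1 : ℕ) + 1 = t - ((k - a : ℕ) : ℤ) + (v:ℕ) + 1 := by
      push_cast
      omega
    rw [h3]
    by_cases hc1 : (v:ℕ) + 1 = (w:ℕ)
    · rw [if_pos (h1.mpr hc1), if_pos hc1]
    · rw [if_neg (fun h => hc1 (h1.mp h)), if_neg hc1]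
      by_cases hc2 : (w:ℕ) ≤ (v:ℕ) ∧ (v:ℕ) - (w:ℕ) + 1 ≤ p
      · rw [if_pos ⟨h2.mpr hc2.1, hc2.2⟩, if_pos hc2]
        push_cast
        rw [show t - ((k:ℤ)+1) + (↑a + ↑v + 1) + 1 = t - ((k:ℤ) - a) + v + 1 by ring_nf]
        congr 1
        omega
      · rw [if_neg, if_neg hc2]
        rw [not_and_or] at hc2 ⊢
        rcases hc2 with h | h
        · exact Or.inl (fun hh => h (h2.mp hh))
        · exact Or.inr h
  rw [h1]
  conv_lhs => rw [← Matrix.fromBlocks_toBlocks B, hB12]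
  rw [Matrix.det_fromBlocks_zero₁₂, hB11, hB22]

lemma detPhi_succ (p : ℕ) (φ : ℕ → ℤ → ℝ) (t : ℤ) (k : ℕ) :
    (PhiMat p φ t (k+1)).det = ∑ i : Fin (k+1),
      (if (i:ℕ)+1 ≤ p then φ ((i:ℕ)+1) (t - ((k:ℤ)+1) + (i:ℕ) + 1) else 0)
        * (PhiMat p φ t (k - (i:ℕ))).det := by
  rw [Matrix.det_succ_column_zero]
  refine Finset.sum_congr rfl fun i _ => ?_
  rw [minor_det]
  have hA : PhiMat p φ t (k+1) i 0
      = if (i:ℕ)+1 ≤ p then φ ((i:ℕ)+1) (t - ((k:ℤ)+1) + (i:ℕ) + 1) else 0 := by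
    rw [PhiMat_apply]
    simp only [Fin.val_zero]
    unfold entAux
    rw [if_neg (by omega)]
    have h2 : (0 ≤ (i:ℕ) ∧ (i:ℕ) - 0 + 1 ≤ p) ↔ (i:ℕ) + 1 ≤ p := by omega
    by_cases hc : (i:ℕ) + 1 ≤ p
    · rw [if_pos (h2.mpr hc), if_pos hc]
      have e1 : (i:ℕ) - 0 + 1 = (i:ℕ) + 1 := by omega
      rw [e1]
      norm_cast
    · rw [if_neg (fun h => hc (h2.mp h)), if_neg hc]
  have hsq : (-1:ℝ)^(i:ℕ) * ((-1:ℝ)^(i:ℕ)) = 1 := by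
    rw [← pow_add, Even.neg_one_pow ⟨(i:ℕ), rfl⟩]
  calc (-1:ℝ)^(i:ℕ) * PhiMat p φ t (k+1) i 0 * ((-1)^(i:ℕ) * (PhiMat p φ t (k - (i:ℕ))).det)
      = ((-1:ℝ)^(i:ℕ) * ((-1:ℝ)^(i:ℕ))) * (PhiMat p φ t (k+1) i 0 * (PhiMat p φ t (k - (i:ℕ))).det) := by ring
    _ = _ := by rw [hsq, one_mul, hA]

lemma xi_rec (p : ℕ) (φ : ℕ → ℤ → ℝ) (t : ℤ) (k : ℤ) :
    xi p φ t k = (if k = 0 then 1 else 0)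
      + ∑ j ∈ Icc 1 p, φ j (t - k + (j:ℤ)) * xi p φ t (k - (j:ℤ)) := by
  have hxineg : ∀ l : ℤ, l < 0 → xi p φ t l = 0 := fun l hl => by
    rw [xi, if_neg (by omega)]
  rcases lt_trichotomy k 0 with hk | hk | hk
  · rw [hxineg k hk, if_neg (by omega), Finset.sum_eq_zero, add_zero]
    intro j hj
    rw [hxineg _ (by have := (Finset.mem_Icc.mp hj).1; omega), mul_zero]
  · subst hk
    rw [if_pos rfl, Finset.sum_eq_zero, add_zero]
    · rw [xi, if_pos le_rfl]
      simp [Matrix.det_isEmpty]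
    · intro j hj
      rw [hxineg _ (by have := (Finset.mem_Icc.mp hj).1; omega), mul_zero]
  · -- k ≥ 1
    obtain ⟨m, hm⟩ : ∃ m : ℕ, k = (m:ℤ) + 1 := ⟨(k-1).toNat, by omega⟩
    subst hm
    set g : ℕ → ℝ := fun j => (if j ≤ p then φ j (t - ((m:ℤ)+1) + j) else 0)
      * xi p φ t (((m:ℤ)+1) - j) with hg
    have h1 : xi p φ t ((m:ℤ)+1) = ∑ j ∈ Icc 1 (m+1), g j := by
      rw [xi, if_pos (by omega)]
    -- identify det with the expansion
      have htn : ((m:ℤ)+1).toNat = m + 1 := by omega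
      rw [htn, detPhi_succ,
        Fin.sum_univ_eq_sum_range (fun x : ℕ =>
          (if x + 1 ≤ p then φ (x+1) (t - ((m:ℤ)+1) + (x:ℤ) + 1) else 0)
            * (PhiMat p φ t (m - x)).det),
        ← Finset.Ico_add_one_right_eq_Icc, Finset.sum_Ico_eq_sum_range]
      refine Finset.sum_congr rfl fun i hi => ?_
      have him : i ≤ m := by simpa [Nat.lt_succ_iff] using hi
      have hxi : (PhiMat p φ t (m - i)).det = xi p φ t (((m:ℤ)+1) - (1+i:ℕ)) := by
        have e : (((m:ℤ)+1) - ((1+i : ℕ) : ℤ)).toNat = m - i := by push_cast; omega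
        rw [xi, if_pos (by push_cast; omega), e]
      rw [hxi]
      simp only [hg]
      by_cases hc : i + 1 ≤ p
      · rw [if_pos hc, if_pos (by omega : 1 + i ≤ p)]
        congr 2
        · omega
        · push_cast; ring
      · rw [if_neg hc, if_neg (by omega : ¬ (1 + i ≤ p))]
    have h2 : ∑ j ∈ Icc 1 p, φ j (t - ((m:ℤ)+1) + (j:ℤ)) * xi p φ t (((m:ℤ)+1) - (j:ℤ))
        = ∑ j ∈ Icc 1 p, g j := by
      refine Finset.sum_congr rfl fun j hj => ?_
      simp only [hg]
      rw [if_pos (Finset.mem_Icc.mp hj).2]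
    have hM : ∀ M : ℕ, m + 1 ≤ M → p ≤ M →
        (∑ j ∈ Icc 1 (m+1), g j = ∑ j ∈ Icc 1 M, g j)
        ∧ (∑ j ∈ Icc 1 p, g j = ∑ j ∈ Icc 1 M, g j) := by
      intro M hM1 hM2
      constructor
      · refine Finset.sum_subset (Finset.Icc_subset_Icc_right hM1) fun x hx hx' => ?_
        have hx1 := Finset.mem_Icc.mp hx
        have hxm : m + 1 < x := by
          by_contra h
          exact hx' (Finset.mem_Icc.mpr ⟨hx1.1, by omega⟩)
        simp only [hg]
        rw [hxineg _ (by push_cast; omega), mul_zero]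
      · refine Finset.sum_subset (Finset.Icc_subset_Icc_right hM2) fun x hx hx' => ?_
        have hx1 := Finset.mem_Icc.mp hx
        have hxp : p < x := by
          by_contra h
          exact hx' (Finset.mem_Icc.mpr ⟨hx1.1, by omega⟩)
        simp only [hg]
        rw [if_neg (by omega), zero_mul]
    obtain ⟨hA, hB⟩ := hM (max (m+1) p) (le_max_left _ _) (le_max_right _ _)
    rw [h1, h2, hA, hB, if_neg (by omega), zero_add]

lemma xi_zero (p : ℕ) (φ : ℕ → ℤ → ℝ) (t : ℤ) : xi p φ t 0 = 1 := by
  rw [xi, if_pos le_rfl]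
  simp [Matrix.det_isEmpty]

lemma xi_neg (p : ℕ) (φ : ℕ → ℤ → ℝ) (t : ℤ) {l : ℤ} (hl : l < 0) : xi p φ t l = 0 := by
  rw [xi, if_neg (by omega)]

/-- The coefficients of the decomposition. -/
noncomputable def coeffA (p : ℕ) (φ : ℕ → ℤ → ℝ) (t : ℤ) (N : ℕ) : ℕ → ℝ := fun m =>
  if m = 0 then xi p φ t N
  else ∑ i ∈ Icc 1 (p - m), φ (m + i) (t - (N:ℤ) + i) * xi p φ t ((N:ℤ) - i)

lemma key_identity (p : ℕ) (hp : 1 ≤ p) (φ : ℕ → ℤ → ℝ) (t : ℤ) (N : ℕ) (hN : 1 ≤ N) :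
    ∀ s : ℕ, xi p φ t ((N:ℤ) + s)
      = ∑ m ∈ range p, coeffA p φ t N m * xi p φ (t - N - m) ((s:ℤ) - m) := by
  intro s
  induction s using Nat.strong_induction_on with
  | _ s IH =>
  rcases Nat.eq_zero_or_pos s with hs | hs
  · subst hs
    push_cast
    rw [add_zero]
    rw [Finset.sum_eq_single 0]
    · rw [coeffA, if_pos rfl]
      norm_num [xi_zero]
    · intro m hm hm0
      rw [xi_neg p φ _ (by have : 1 ≤ m := Nat.one_le_iff_ne_zero.mpr hm0; omega), mul_zero]
    · intro h
      exact absurd (Finset.mem_range.mpr (by omega)) h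
  · -- s ≥ 1
    set c : ℕ → ℝ := fun j => φ j (t - ((N:ℤ) + s) + j) with hc
    have L : xi p φ t ((N:ℤ) + s)
        = ∑ j ∈ Icc 1 p, c j * xi p φ t (((N:ℤ) + s) - j) := by
      rw [xi_rec p φ t ((N:ℤ) + s),
        if_neg (show ¬((N:ℤ) + (s:ℤ) = 0) by omega), zero_add]
    have R : ∀ m : ℕ, xi p φ (t - N - m) ((s:ℤ) - m)
        = (if (s:ℤ) - m = 0 then 1 else 0)
          + ∑ j ∈ Icc 1 p, c j * xi p φ (t - N - m) ((s:ℤ) - m - j) := by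
      intro m
      rw [xi_rec p φ (t - N - m) ((s:ℤ) - m)]
      congr 1
      refine Finset.sum_congr rfl fun j hj => ?_
      simp only [hc]
      congr 2
      ring
    have hRHS : ∑ m ∈ range p, coeffA p φ t N m * xi p φ (t - N - m) ((s:ℤ) - m)
        = (∑ m ∈ range p, coeffA p φ t N m * (if (s:ℤ) - m = 0 then 1 else 0))
          + ∑ j ∈ Icc 1 p, c j *
              (∑ m ∈ range p, coeffA p φ t N m * xi p φ (t - N - m) ((s:ℤ) - j - m)) := by
      calc ∑ m ∈ range p, coeffA p φ t N m * xi p φ (t - N - m) ((s:ℤ) - m)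
          = ∑ m ∈ range p, (coeffA p φ t N m * (if (s:ℤ) - m = 0 then 1 else 0)
              + ∑ j ∈ Icc 1 p, c j * (coeffA p φ t N m * xi p φ (t - N - m) ((s:ℤ) - j - m))) := by
            refine Finset.sum_congr rfl fun m hm => ?_
            rw [R m, mul_add, Finset.mul_sum]
            congr 1
            refine Finset.sum_congr rfl fun j hj => ?_
            rw [show (s:ℤ) - m - j = (s:ℤ) - j - m by ring]
            ring
        _ = _ := by
            rw [Finset.sum_add_distrib]
            congr 1
            rw [Finset.sum_comm]
            refine Finset.sum_congr rfl fun j hj => ?_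
            rw [Finset.mul_sum]
    -- the inner sums via IH
    have hInner : ∀ j ∈ Icc 1 p,
        (∑ m ∈ range p, coeffA p φ t N m * xi p φ (t - N - m) ((s:ℤ) - j - m))
          = if j ≤ s then xi p φ t (((N:ℤ) + s) - j) else 0 := by
      intro j hj
      have hj1 : 1 ≤ j := (Finset.mem_Icc.mp hj).1
      by_cases hjs : j ≤ s
      · rw [if_pos hjs]
        have := (IH (s - j) (by omega)).symm
        have hcast : ((s - j : ℕ) : ℤ) = (s:ℤ) - j := by push_cast; omega
        rw [hcast] at this
        rw [this]
        congr 1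
        push_cast
        omega
      · rw [if_neg hjs]
        refine Finset.sum_eq_zero fun m hm => ?_
        rw [xi_neg p φ _ (by omega), mul_zero]
    -- the delta sum
    have hDelta : (∑ m ∈ range p, coeffA p φ t N m * (if (s:ℤ) - m = 0 then 1 else 0))
        = if s < p then coeffA p φ t N s else 0 := by
      by_cases hsp : s < p
      · rw [if_pos hsp, Finset.sum_eq_single s]
        · rw [if_pos (by omega), mul_one]
        · intro m hm hms
          rw [if_neg (by
            intro h
            exact hms (by omega)), mul_zero]
        · intro h
          exact absurd (Finset.mem_range.mpr hsp) h
      · rw [if_neg hsp]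
        refine Finset.sum_eq_zero fun m hm => ?_
        have := Finset.mem_range.mp hm
        rw [if_neg (by omega), mul_zero]
    have hIcc : ∑ j ∈ Icc 1 p, c j *
          (∑ m ∈ range p, coeffA p φ t N m * xi p φ (t - N - m) ((s:ℤ) - j - m))
        = ∑ j ∈ Icc 1 p, c j * (if j ≤ s then xi p φ t (((N:ℤ) + s) - j) else 0) :=
      Finset.sum_congr rfl (fun j hj => by rw [hInner j hj])
    rw [L, hRHS, hIcc, hDelta]
    -- remaining: ∑_{j∈Icc 1 p} c j * xi (N+s-j) = D + ∑ c j * (if j ≤ s ...)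
    have hsplit : ∑ j ∈ Icc 1 p, c j * xi p φ t (((N:ℤ) + s) - j)
        - ∑ j ∈ Icc 1 p, c j * (if j ≤ s then xi p φ t (((N:ℤ) + s) - j) else 0)
        = ∑ j ∈ Icc 1 p, (if j ≤ s then 0 else c j * xi p φ t (((N:ℤ) + s) - j)) := by
      rw [← Finset.sum_sub_distrib]
      refine Finset.sum_congr rfl fun j hj => ?_
      by_cases hjs : j ≤ s
      · rw [if_pos hjs, if_pos hjs]
        ring
      · rw [if_neg hjs, if_neg hjs]
        ring
    have hfinal : ∑ j ∈ Icc 1 p, (if j ≤ s then 0 else c j * xi p φ t (((N:ℤ) + s) - j))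
        = if s < p then coeffA p φ t N s else 0 := by
      by_cases hsp : s < p
      · rw [if_pos hsp]
        have h1 : ∑ j ∈ Icc 1 p, (if j ≤ s then 0 else c j * xi p φ t (((N:ℤ) + s) - j))
            = ∑ j ∈ Icc (s+1) p, c j * xi p φ t (((N:ℤ) + s) - j) := by
          have e0 : ∀ j, (if j ≤ s then (0:ℝ) else c j * xi p φ t (((N:ℤ) + s) - j))
              = if ¬ (j ≤ s) then c j * xi p φ t (((N:ℤ) + s) - j) else 0 := fun j => by
            by_cases h : j ≤ s <;> simp [h]
          rw [Finset.sum_congr rfl (fun j _ => e0 j), ← Finset.sum_filter]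
          refine Finset.sum_congr ?_ (fun _ _ => rfl)
          ext j
          simp only [Finset.mem_filter, Finset.mem_Icc]
          omega
        rw [h1, coeffA, if_neg (by omega)]
        rw [← Finset.Ico_add_one_right_eq_Icc, ← Finset.Ico_add_one_right_eq_Icc,
          Finset.sum_Ico_eq_sum_range, Finset.sum_Ico_eq_sum_range]
        have hrr : p + 1 - (s + 1) = p - s ∧ p - s + 1 - 1 = p - s := by omega
        rw [hrr.1, hrr.2]
        refine Finset.sum_congr rfl fun i hi => ?_
        simp only [hc]
        have e1 : s + 1 + i = s + (1 + i) := by omega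
        rw [e1]
        congr 2
        · push_cast; ring
        · push_cast; ring
      · rw [if_neg hsp]
        refine Finset.sum_eq_zero fun j hj => ?_
        rw [if_pos (by have := (Finset.mem_Icc.mp hj).2; omega)]
    linarith [hsplit, hfinal]

open MeasureTheory Filter

lemma l2_mul_integrable {Ω : Type*} {m0 : MeasurableSpace Ω} {μ : Measure Ω}
    {f g : Ω → ℝ} (hf : MemLp f 2 μ) (hg : MemLp g 2 μ) :
    Integrable (fun ω => f ω * g ω) μ := by
  have h1 := (hf.add hg).integrable_sq
  have h2 := hf.integrable_sq
  have h3 := hg.integrable_sq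
  have he : (fun ω => f ω * g ω) = fun ω => ((f ω + g ω)^2 - f ω^2 - g ω^2)/2 := by
    funext ω; ring
  rw [he]
  exact ((h1.sub h2).sub h3).div_const 2

lemma inner_toLp_eq {Ω : Type*} {m0 : MeasurableSpace Ω} {μ : Measure Ω}
    {f g : Ω → ℝ} (hf : MemLp f 2 μ) (hg : MemLp g 2 μ) :
    (inner ℝ (hf.toLp f) (hg.toLp g) : ℝ) = ∫ ω, f ω * g ω ∂μ := by
  rw [MeasureTheory.L2.inner_def]
  refine integral_congr_ae ?_
  filter_upwards [hf.coeFn_toLp, hg.coeFn_toLp] with ω h1 h2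
  rw [h1, h2]
  simp [RCLike.inner_apply, conj_trivial, mul_comm]

lemma norm_sq_sub_toLp {Ω : Type*} {m0 : MeasurableSpace Ω} {μ : Measure Ω}
    {f g : Ω → ℝ} (hf : MemLp f 2 μ) (hg : MemLp g 2 μ) :
    ‖hf.toLp f - hg.toLp g‖^2 = ∫ ω, (f ω - g ω)^2 ∂μ := by
  rw [← real_inner_self_eq_norm_sq, MeasureTheory.L2.inner_def]
  have hsub : (hf.toLp f - hg.toLp g : Lp ℝ 2 μ) = (hf.sub hg).toLp (f - g) := by
    rw [MemLp.toLp_sub]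
  rw [hsub]
  refine integral_congr_ae ?_
  filter_upwards [(hf.sub hg).coeFn_toLp] with ω h1
  rw [h1]
  simp only [RCLike.inner_apply, conj_trivial, Pi.sub_apply]
  ring

lemma sum_ite_trunc (K d : ℕ) (G : ℕ → ℝ) :
    (∑ s ∈ Finset.range (K+1), if d + s ≤ K then G s else 0)
      = ∑ s ∈ Finset.range (K+1-d), G s := by
  rw [← Finset.sum_subset (Finset.range_subset_range.mpr (show K+1-d ≤ K+1 by omega))
      (fun x hx hx' => if_neg (by
        have h1 := Finset.mem_range.mp hx
        have h2 : ¬ x < K+1-d := fun h => hx' (Finset.mem_range.mpr h)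
        omega))]
  exact Finset.sum_congr rfl fun s hs => if_pos (by have := Finset.mem_range.mp hs; omega)

lemma sum_shift (K m : ℕ) (G : ℕ → ℝ) (hG : ∀ s, s < m → G s = 0) :
    ∑ s ∈ Finset.range (K+1), G s = ∑ s ∈ Finset.range (K+1-m), G (m+s) := by
  rcases le_or_gt m (K+1) with hm | hm
  · have h0 : ∑ x ∈ Finset.Ico 0 m, G x = 0 :=
      Finset.sum_eq_zero (fun x hx => hG x (Finset.mem_Ico.mp hx).2)
    calc ∑ s ∈ Finset.range (K+1), G s = ∑ s ∈ Finset.Ico 0 (K+1), G s := by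
          rw [Finset.range_eq_Ico]
      _ = ∑ x ∈ Finset.Ico 0 m, G x + ∑ x ∈ Finset.Ico m (K+1), G x :=
          (Finset.sum_Ico_consecutive _ (Nat.zero_le m) hm).symm
      _ = ∑ x ∈ Finset.Ico m (K+1), G x := by rw [h0, zero_add]
      _ = ∑ s ∈ Finset.range (K+1-m), G (m+s) := Finset.sum_Ico_eq_sum_range _ _ _
  · rw [Finset.sum_eq_zero (fun x hx => hG x (by have := Finset.mem_range.mp hx; omega))]
    rw [show K+1-m = 0 by omega]
    simp

/-- Under Assumption 1, the autocovariances of the MA(∞) process satisfy the recursion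
`Cov(Y_t, Y_{t−N}) = ξ_{t,N} Var(Y_{t−N})
  + Σ_{m=1}^{p−1} Σ_{i=1}^{p−m} φ_{m+i}(t−N+i) ξ_{t,N−i} Cov(Y_{t−N}, Y_{t−N−m})`. -/

theorem ma_infinity_autocovariance_recursion
    (p : ℕ) (hp : 1 ≤ p) (φ : ℕ → ℤ → ℝ)
    {Ω : Type*} {m0 : MeasurableSpace Ω} {μ : Measure Ω} [IsProbabilityMeasure μ]
    (𝓕 : Filtration ℤ m0)
    (ε : ℤ → Ω → ℝ)
    (hεmeas : ∀ τ : ℤ, StronglyMeasurable[𝓕 τ] (ε τ))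
    (hεL2 : ∀ τ : ℤ, MemLp (ε τ) 2 μ)
    (hεmart : ∀ τ : ℤ, μ[ε τ | 𝓕 (τ - 1)] =ᵐ[μ] 0)
    (hA1 : ∀ r : ℕ, BddAbove (Set.range fun τ : ℤ =>
      (xi p φ τ r) ^ 2 * ∫ ω, (ε (τ - r) ω) ^ 2 ∂μ))
    (hA2 : Summable fun r : ℕ => ⨆ τ : ℤ,
      (xi p φ τ r) ^ 2 * ∫ ω, (ε (τ - r) ω) ^ 2 ∂μ)
    (mu : ℤ → ℝ)
    (hmu : ∀ t : ℤ, Tendsto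
      (fun n : ℕ => ∑ r ∈ Finset.range (n + 1), xi p φ t r * φ 0 (t - r))
      atTop (nhds (mu t)))
    (Z : ℤ → Ω → ℝ)
    (hZL2 : ∀ t : ℤ, MemLp (Z t) 2 μ)
    (hZ : ∀ t : ℤ, Tendsto (fun n : ℕ =>
        ∫ ω, ((∑ r ∈ Finset.range (n + 1), xi p φ t r * ε (t - r) ω) - Z t ω) ^ 2 ∂μ)
      atTop (nhds 0))
    (Y : ℤ → Ω → ℝ)
    (hY : ∀ t : ℤ, ∀ ω, Y t ω = mu t + Z t ω)
    (t : ℤ) (N : ℕ) (hN : 1 ≤ N) :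
    ∫ ω, (Y t ω - ∫ x, Y t x ∂μ) * (Y (t - N) ω - ∫ x, Y (t - N) x ∂μ) ∂μ
      = xi p φ t N * ∫ ω, (Y (t - N) ω - ∫ x, Y (t - N) x ∂μ) ^ 2 ∂μ
        + ∑ m ∈ Finset.Icc 1 (p - 1), ∑ i ∈ Finset.Icc 1 (p - m),
            φ (m + i) (t - N + i) * xi p φ t ((N : ℤ) - i)
              * ∫ ω, (Y (t - N) ω - ∫ x, Y (t - N) x ∂μ)
                  * (Y (t - N - m) ω - ∫ x, Y (t - N - m) x ∂μ) ∂μ := by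
  classical
  -- partial sums
  set S : ℤ → ℕ → Ω → ℝ :=
    fun u n ω => ∑ r ∈ Finset.range (n + 1), xi p φ u r * ε (u - r) ω with hSdef
  have hSmem : ∀ u n, MemLp (S u n) 2 μ := by
    intro u n
    exact memLp_finset_sum _ (fun r _ => (hεL2 (u - r)).const_mul _)
  -- mean zero of ε
  have hmean : ∀ a : ℤ, ∫ ω, ε a ω ∂μ = 0 := by
    intro a
    rw [← integral_condExp (𝓕.le (a - 1)) (f := ε a), integral_congr_ae (hεmart a)]
    simp
  -- orthogonality
  have horth : ∀ a b : ℤ, a ≠ b → ∫ ω, ε a ω * ε b ω ∂μ = 0 := by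
    have key : ∀ a b : ℤ, b < a → ∫ ω, ε a ω * ε b ω ∂μ = 0 := by
      intro a b hab
      have hm : 𝓕 (a-1) ≤ m0 := 𝓕.le _
      have hint : Integrable (fun ω => ε b ω * ε a ω) μ := l2_mul_integrable (hεL2 b) (hεL2 a)
      have hbmeas : StronglyMeasurable[𝓕 (a-1)] (ε b) :=
        (hεmeas b).mono (𝓕.mono (by omega))
      have hpull := condExp_mul_of_stronglyMeasurable_left (m := 𝓕 (a-1)) (μ := μ) hbmeas
        (by exact hint) ((hεL2 a).integrable (by norm_num))
      have hzero : (ε b) * μ[ε a | 𝓕 (a-1)] =ᵐ[μ] 0 := by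
        filter_upwards [hεmart a] with ω hω
        simp [Pi.mul_apply, hω]
      have h0 : μ[(ε b) * (ε a) | 𝓕 (a-1)] =ᵐ[μ] 0 := hpull.trans hzero
      have hint2 : ∫ ω, ε b ω * ε a ω ∂μ = ∫ ω, (μ[(ε b) * (ε a) | 𝓕 (a-1)]) ω ∂μ :=
        (integral_condExp hm).symm
      rw [show (fun ω => ε a ω * ε b ω) = fun ω => ε b ω * ε a ω from
        funext fun ω => mul_comm _ _]
      rw [hint2, integral_congr_ae h0]
      simp
    intro a b hab
    rcases lt_or_gt_of_ne hab with h | h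
    · rw [show (fun ω => ε a ω * ε b ω) = fun ω => ε b ω * ε a ω from
        funext fun ω => mul_comm _ _]
      exact key b a h
    · exact key a b h
  -- inner products of partial sums
  have hSS : ∀ (u : ℤ) (d n : ℕ),
      ∫ ω, S u n ω * S (u - d) n ω ∂μ
        = ∑ q ∈ Finset.range (n+1), (if d + q ≤ n then
            xi p φ u ((d:ℤ) + q) * xi p φ (u - d) q * (∫ ω, (ε (u - d - q) ω)^2 ∂μ)
          else 0) := by
    intro u d n
    have h1 : ∀ ω, S u n ω * S (u - d) n ω
        = ∑ r ∈ Finset.range (n+1), xi p φ u r * (ε (u - r) ω * S (u - d) n ω) := by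
      intro ω
      rw [hSdef]
      simp only
      rw [Finset.sum_mul]
      exact Finset.sum_congr rfl fun r _ => by ring
    rw [integral_congr_ae (Eventually.of_forall h1),
      integral_finset_sum (μ := μ) (Finset.range (n+1))
        (f := fun (r : ℕ) (ω : Ω) => xi p φ u r * (ε (u - r) ω * S (u - d) n ω))
        (fun r _ => ((l2_mul_integrable (hεL2 (u - r)) (hSmem (u-d) n)).const_mul _))]
    have h2 : ∀ r : ℕ, ∫ ω, ε (u - r) ω * S (u-d) n ω ∂μ
        = ∑ q ∈ Finset.range (n+1), xi p φ (u-d) q * ∫ ω, ε (u-r) ω * ε (u-d-q) ω ∂μ := by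
      intro r
      have h2a : ∀ ω, ε (u - r) ω * S (u-d) n ω
          = ∑ q ∈ Finset.range (n+1), xi p φ (u-d) q * (ε (u-r) ω * ε (u-d-q) ω) := by
        intro ω
        rw [hSdef]
        simp only
        rw [Finset.mul_sum]
        exact Finset.sum_congr rfl fun q _ => by ring
      rw [integral_congr_ae (Eventually.of_forall h2a),
        integral_finset_sum (μ := μ) (Finset.range (n+1))
          (f := fun (q : ℕ) (ω : Ω) => xi p φ (u-d) q * (ε (u-r) ω * ε (u-d-q) ω))
          (fun q _ => ((l2_mul_integrable (hεL2 (u - r)) (hεL2 (u-d-q))).const_mul _))]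
      exact Finset.sum_congr rfl fun q _ => integral_const_mul _ _
    have h3 : ∀ r q : ℕ, ∫ ω, ε (u-r) ω * ε (u-d-q) ω ∂μ
        = if r = d + q then ∫ ω, (ε (u-d-q) ω)^2 ∂μ else 0 := by
      intro r q
      by_cases h : r = d + q
      · subst h
        rw [if_pos rfl]
        have he : u - ((d + q : ℕ) : ℤ) = u - d - q := by push_cast; ring
        rw [he]
        exact integral_congr_ae (Eventually.of_forall fun ω => (pow_two (ε (u-d-q) ω)).symm)
      · rw [if_neg h]
        exact horth _ _ (fun hc => h (by omega))
    calc ∑ r ∈ Finset.range (n+1), ∫ ω, xi p φ u r * (ε (u - r) ω * S (u-d) n ω) ∂μ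
        = ∑ r ∈ Finset.range (n+1), xi p φ u r *
            ∑ q ∈ Finset.range (n+1), xi p φ (u-d) q * ∫ ω, ε (u-r) ω * ε (u-d-q) ω ∂μ := by
          refine Finset.sum_congr rfl fun r _ => ?_
          rw [integral_const_mul, h2 r]
      _ = ∑ q ∈ Finset.range (n+1), ∑ r ∈ Finset.range (n+1),
            (if r = d + q then
              xi p φ u r * xi p φ (u-d) q * ∫ ω, (ε (u-d-q) ω)^2 ∂μ else 0) := by
          rw [Finset.sum_comm]
          refine Finset.sum_congr rfl fun r _ => ?_
          rw [Finset.mul_sum]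
          refine Finset.sum_congr rfl fun q _ => ?_
          rw [h3 r q]
          by_cases h : r = d + q
          · rw [if_pos h, if_pos h]; ring
          · rw [if_neg h, if_neg h]; ring
      _ = ∑ q ∈ Finset.range (n+1), (if d + q ≤ n then
            xi p φ u ((d:ℤ) + q) * xi p φ (u - d) q * (∫ ω, (ε (u - d - q) ω)^2 ∂μ)
          else 0) := by
          refine Finset.sum_congr rfl fun q _ => ?_
          rw [Finset.sum_ite_eq' (Finset.range (n+1)) (d+q)
            (fun r => xi p φ u r * xi p φ (u-d) q * ∫ ω, (ε (u-d-q) ω)^2 ∂μ)]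
          by_cases h : d + q ≤ n
          · rw [if_pos (Finset.mem_range.mpr (by omega)), if_pos h]
            push_cast
            ring
          · rw [if_neg (fun hc => h (by have := Finset.mem_range.mp hc; omega)), if_neg h]
  -- Lp elements and convergence
  set F : ℤ → ℕ → Lp ℝ 2 μ := fun u n => (hSmem u n).toLp (S u n) with hF
  set ζ : ℤ → Lp ℝ 2 μ := fun u => (hZL2 u).toLp (Z u) with hζ
  have hFconv : ∀ u : ℤ, Tendsto (fun n => F u n) atTop (nhds (ζ u)) := by
    intro u
    rw [tendsto_iff_norm_sub_tendsto_zero]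
    have hsq : Tendsto (fun n => ‖F u n - ζ u‖^2) atTop (nhds 0) := by
      have he : ∀ n, ‖F u n - ζ u‖^2 = ∫ ω, (S u n ω - Z u ω)^2 ∂μ := fun n =>
        norm_sq_sub_toLp (hSmem u n) (hZL2 u)
      rw [show (fun n => ‖F u n - ζ u‖^2)
        = fun n => ∫ ω, (S u n ω - Z u ω)^2 ∂μ from funext he]
      exact hZ u
    have h4 : Tendsto (fun n => Real.sqrt (‖F u n - ζ u‖^2)) atTop (nhds (Real.sqrt 0)) :=
      (Real.continuous_sqrt.tendsto 0).comp hsq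
    simpa [Real.sqrt_sq (norm_nonneg _), Real.sqrt_zero] using h4
  have hIP : ∀ u v : ℤ, Tendsto (fun n => ∫ ω, S u n ω * S v n ω ∂μ) atTop
      (nhds (∫ ω, Z u ω * Z v ω ∂μ)) := by
    intro u v
    have h5 := Filter.Tendsto.inner (𝕜 := ℝ) (hFconv u) (hFconv v)
    have h6 : ∀ n, (inner ℝ (F u n) (F v n) : ℝ) = ∫ ω, S u n ω * S v n ω ∂μ := fun n =>
      inner_toLp_eq (hSmem u n) (hSmem v n)
    have h7 : (inner ℝ (ζ u) (ζ v) : ℝ) = ∫ ω, Z u ω * Z v ω ∂μ :=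
      inner_toLp_eq (hZL2 u) (hZL2 v)
    rw [show (fun n => ∫ ω, S u n ω * S v n ω ∂μ)
      = fun n => (inner ℝ (F u n) (F v n) : ℝ) from funext fun n => (h6 n).symm, ← h7]
    exact h5
  -- Z has mean zero
  have hZmean : ∀ u : ℤ, ∫ ω, Z u ω ∂μ = 0 := by
    intro u
    have hone : MemLp (fun _ : Ω => (1:ℝ)) 2 μ := memLp_const 1
    have h8 : ∀ n, (inner ℝ (F u n) (hone.toLp _) : ℝ) = 0 := by
      intro n
      rw [inner_toLp_eq (hSmem u n) hone]
      rw [integral_congr_ae (Eventually.of_forall (fun ω => mul_one (S u n ω)))]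
      rw [hSdef]
      simp only
      rw [integral_finset_sum (μ := μ) (Finset.range (n+1))
        (f := fun (r : ℕ) (ω : Ω) => xi p φ u r * ε (u - r) ω)
        (fun r _ => ((hεL2 (u - r)).integrable one_le_two).const_mul _)]
      refine Finset.sum_eq_zero fun r _ => ?_
      rw [integral_const_mul, hmean, mul_zero]
    have h12 : Tendsto (fun n : ℕ => (inner ℝ (F u n) (hone.toLp _) : ℝ)) atTop
        (nhds (inner ℝ (ζ u) (hone.toLp _) : ℝ)) :=
      Filter.Tendsto.inner (𝕜 := ℝ) (hFconv u) tendsto_const_nhds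
    have h13 : Tendsto (fun n : ℕ => (inner ℝ (F u n) (hone.toLp _) : ℝ)) atTop (nhds 0) := by
      rw [show (fun n : ℕ => (inner ℝ (F u n) (hone.toLp _) : ℝ)) = fun _ => (0:ℝ) from
        funext h8]
      exact tendsto_const_nhds
    have h14 := tendsto_nhds_unique h12 h13
    have h10 : (inner ℝ (ζ u) (hone.toLp _) : ℝ) = ∫ ω, Z u ω ∂μ := by
      rw [inner_toLp_eq (hZL2 u) hone]
      exact integral_congr_ae (Eventually.of_forall fun ω => mul_one _)
    rw [← h10, h14]
  -- the combinatorial identity for partial sums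
  have hcomb : ∀ n : ℕ, N ≤ n →
      ∫ ω, S t n ω * S (t - N) n ω ∂μ
        = ∑ m ∈ Finset.range p, coeffA p φ t N m *
            ∫ ω, S (t - N) (n - N) ω * S (t - N - m) (n - N) ω ∂μ := by
    intro n hn
    rw [hSS t N n]
    have e1 : ∀ m : ℕ, ∫ ω, S (t - N) (n - N) ω * S (t - N - m) (n - N) ω ∂μ
        = ∑ s ∈ Finset.range (n - N + 1 - m),
            xi p φ (t - N) ((m:ℤ) + s) * xi p φ (t - N - m) s
              * ∫ ω, (ε (t - N - m - s) ω)^2 ∂μ := by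
      intro m
      rw [hSS (t - N) m (n - N), sum_ite_trunc]
    rw [sum_ite_trunc n N
      (fun s => xi p φ t ((N:ℤ) + s) * xi p φ (t - N) s * ∫ ω, (ε (t - N - s) ω)^2 ∂μ)]
    have hK : n + 1 - N = (n - N) + 1 := by omega
    rw [hK]
    calc ∑ s ∈ Finset.range ((n - N) + 1),
          xi p φ t ((N:ℤ) + s) * xi p φ (t - N) s * ∫ ω, (ε (t - N - s) ω)^2 ∂μ
        = ∑ s ∈ Finset.range ((n - N) + 1), ∑ m ∈ Finset.range p,
            coeffA p φ t N m * (xi p φ (t - N - m) ((s:ℤ) - m)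
              * (xi p φ (t - N) s * ∫ ω, (ε (t - N - s) ω)^2 ∂μ)) := by
          refine Finset.sum_congr rfl fun s _ => ?_
          rw [key_identity p hp φ t N hN s, Finset.sum_mul, Finset.sum_mul]
          refine Finset.sum_congr rfl fun m _ => by ring
      _ = ∑ m ∈ Finset.range p, coeffA p φ t N m *
            ∑ s ∈ Finset.range ((n - N) + 1), xi p φ (t - N - m) ((s:ℤ) - m)
              * (xi p φ (t - N) s * ∫ ω, (ε (t - N - s) ω)^2 ∂μ) := by
          rw [Finset.sum_comm]
          exact Finset.sum_congr rfl fun m _ => by rw [Finset.mul_sum]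
      _ = ∑ m ∈ Finset.range p, coeffA p φ t N m *
            ∫ ω, S (t - N) (n - N) ω * S (t - N - m) (n - N) ω ∂μ := by
          refine Finset.sum_congr rfl fun m hm => ?_
          rw [e1 m]
          congr 1
          rw [sum_shift (n - N) m _ (fun s hs => by
            rw [xi_neg p φ _ (by omega), zero_mul])]
          refine Finset.sum_congr rfl fun s hs => ?_
          push_cast
          ring
  -- pass to the limit
  have hlimR : Tendsto (fun n : ℕ => ∑ m ∈ Finset.range p, coeffA p φ t N m *
        ∫ ω, S (t - N) (n - N) ω * S (t - N - m) (n - N) ω ∂μ) atTop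
      (nhds (∑ m ∈ Finset.range p, coeffA p φ t N m *
        ∫ ω, Z (t - N) ω * Z (t - N - m) ω ∂μ)) := by
    refine tendsto_finset_sum _ fun m _ => ?_
    exact ((hIP (t - N) (t - N - m)).comp (tendsto_sub_atTop_nat N)).const_mul _
  have heq : (fun n : ℕ => ∑ m ∈ Finset.range p, coeffA p φ t N m *
        ∫ ω, S (t - N) (n - N) ω * S (t - N - m) (n - N) ω ∂μ)
      =ᶠ[atTop] (fun n : ℕ => ∫ ω, S t n ω * S (t - N) n ω ∂μ) :=
    eventually_atTop.mpr ⟨N, fun n hn => (hcomb n hn).symm⟩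
  have hstar : ∫ ω, Z t ω * Z (t - N) ω ∂μ
      = ∑ m ∈ Finset.range p, coeffA p φ t N m *
          ∫ ω, Z (t - N) ω * Z (t - N - m) ω ∂μ :=
    tendsto_nhds_unique (hIP t (t - N)) (hlimR.congr' heq)
  -- mean of Y and centering
  have hYint : ∀ u : ℤ, ∫ ω, Y u ω ∂μ = mu u := by
    intro u
    rw [integral_congr_ae (Eventually.of_forall (hY u)),
      integral_add (integrable_const _) ((hZL2 u).integrable one_le_two),
      integral_const, hZmean u, add_zero]
    simp
  have hYc : ∀ u : ℤ, ∀ ω, Y u ω - ∫ x, Y u x ∂μ = Z u ω := by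
    intro u ω
    rw [hYint u, hY u ω]
    ring
  have g1 : ∫ ω, (Y t ω - ∫ x, Y t x ∂μ) * (Y (t - N) ω - ∫ x, Y (t - N) x ∂μ) ∂μ
      = ∫ ω, Z t ω * Z (t - N) ω ∂μ :=
    integral_congr_ae (Eventually.of_forall fun ω => by simp only [hYc])
  have g2 : ∫ ω, (Y (t - N) ω - ∫ x, Y (t - N) x ∂μ)^2 ∂μ
      = ∫ ω, Z (t - N) ω * Z (t - N) ω ∂μ :=
    integral_congr_ae (Eventually.of_forall fun ω => by simp only [hYc]; ring)
  have g3 : ∀ m : ℕ, ∫ ω, (Y (t - N) ω - ∫ x, Y (t - N) x ∂μ)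
        * (Y (t - N - m) ω - ∫ x, Y (t - N - m) x ∂μ) ∂μ
      = ∫ ω, Z (t - N) ω * Z (t - N - m) ω ∂μ := fun m =>
    integral_congr_ae (Eventually.of_forall fun ω => by simp only [hYc])
  rw [g1, g2, hstar]
  rw [Finset.range_eq_Ico, Finset.sum_eq_sum_Ico_succ_bot (by omega : 0 < p)]
  congr 1
  · rw [coeffA, if_pos rfl]
    norm_num
  · rw [show Finset.Ico 1 p = Finset.Icc 1 (p-1) by
      rw [← Finset.Ico_add_one_right_eq_Icc]
      congr 1
      omega]
    refine Finset.sum_congr rfl fun m hm => ?_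
    rw [g3 m, coeffA, if_neg (by have := (Finset.mem_Icc.mp hm).1; omega), Finset.sum_mul]
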